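/- With R = Σ_{t=0}^T (U_t⋯U_1) ⊗ |t⟩⟨t| and H_prop^t = (1/2)(I ⊗ |t⟩⟨t| + I ⊗ |t-1⟩⟨t-1| − U_t ⊗ |t⟩⟨t-1| − U_t† ⊗ |t-1⟩⟨t|) for 1 ≤ t ≤ T, one has R† H_prop^t R = (1/2) I ⊗ (|t⟩ − |t-1⟩)(⟨t| − ⟨t-1|). -/

import Mathlib

open Matrix Kronecker Finset

lemma kron_conjT {N M : ℕ} (A : Matrix (Fin N) (Fin N) ℂ) (B : Matrix (Fin M) (Fin M) ℂ) :
    (A ⊗ₖ B)ᴴ = Aᴴ ⊗ₖ Bᴴ := by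
  ext ⟨i, j⟩ ⟨k, l⟩
  simp [conjTranspose_apply, kroneckerMap_apply]

lemma vmv_mul {M : ℕ} (a b c d : Fin M → ℂ) :
    vecMulVec a b * vecMulVec c d = (b ⬝ᵥ c) • vecMulVec a d := by
  ext i j
  simp [mul_apply, vecMulVec_apply, dotProduct, Finset.sum_mul, Finset.mul_sum]
  ring_nf
  exact Finset.sum_congr rfl fun k _ => by ring

/-- `R† H_prop^t R = (1/2) I ⊗ (|t⟩−|t-1⟩)(⟨t|−⟨t-1|)` for `1 ≤ t ≤ T`, where
`R = Σ_{t=0}^T (U_t⋯U_1) ⊗ |t⟩⟨t|` and `W t = U_t⋯U_1`. -/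
theorem stmt3 (N T : ℕ) (U W : ℕ → Matrix (Fin N) (Fin N) ℂ)
    (hU : ∀ t, U t ∈ Matrix.unitaryGroup (Fin N) ℂ)
    (hW0 : W 0 = 1) (hW : ∀ t, W (t + 1) = U (t + 1) * W t)
    (e : ℕ → Fin (T + 1) → ℂ)
    (he : ∀ i ≤ T, ∀ j ≤ T, star (e i) ⬝ᵥ e j = if i = j then 1 else 0)
    (t : ℕ) (ht1 : 1 ≤ t) (htT : t ≤ T) :
    (∑ r ∈ Finset.range (T + 1), (W r) ⊗ₖ vecMulVec (e r) (star (e r)))ᴴ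
      * ((1/2 : ℂ) •
        ((1 : Matrix (Fin N) (Fin N) ℂ) ⊗ₖ vecMulVec (e t) (star (e t))
          + (1 : Matrix (Fin N) (Fin N) ℂ) ⊗ₖ vecMulVec (e (t-1)) (star (e (t-1)))
          - U t ⊗ₖ vecMulVec (e t) (star (e (t-1)))
          - (U t)ᴴ ⊗ₖ vecMulVec (e (t-1)) (star (e t))))
      * (∑ r ∈ Finset.range (T + 1), (W r) ⊗ₖ vecMulVec (e r) (star (e r)))
    = (1/2 : ℂ) •
        ((1 : Matrix (Fin N) (Fin N) ℂ) ⊗ₖ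
          vecMulVec (e t - e (t-1)) (star (e t - e (t-1)))) := by
  -- unitarity of W
  have hWu : ∀ r, (W r)ᴴ * W r = 1 := by
    intro r
    induction r with
    | zero => simp [hW0]
    | succ n ih =>
      rw [hW, conjTranspose_mul, mul_assoc, ← mul_assoc (U (n+1))ᴴ]
      have h1 : (U (n+1))ᴴ * U (n+1) = 1 := by
        have := (hU (n+1)).1
        rwa [Matrix.star_eq_conjTranspose] at this
      rw [h1, one_mul, ih]
  set R : Matrix (Fin N × Fin (T+1)) (Fin N × Fin (T+1)) ℂ :=
    ∑ r ∈ Finset.range (T + 1), (W r) ⊗ₖ vecMulVec (e r) (star (e r)) with hR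
  -- key collapse lemma
  have key : ∀ (A : Matrix (Fin N) (Fin N) ℂ) (i j : ℕ), i ≤ T → j ≤ T →
      Rᴴ * (A ⊗ₖ vecMulVec (e i) (star (e j))) * R
        = ((W i)ᴴ * A * W j) ⊗ₖ vecMulVec (e i) (star (e j)) := by
    intro A i j hi hj
    have hRH : Rᴴ = ∑ r ∈ Finset.range (T + 1), (W r)ᴴ ⊗ₖ vecMulVec (e r) (star (e r)) := by
      rw [hR, conjTranspose_sum]
      refine Finset.sum_congr rfl fun r _ => ?_
      rw [kron_conjT]
      congr 1
      ext a b
      simp [conjTranspose_apply, vecMulVec_apply, mul_comm]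
    rw [hRH, hR, Finset.sum_mul, Finset.mul_sum]
    have step1 : ∀ r ∈ Finset.range (T+1),
        ((W r)ᴴ ⊗ₖ vecMulVec (e r) (star (e r))) * (A ⊗ₖ vecMulVec (e i) (star (e j)))
          = if r = i then (((W r)ᴴ * A) ⊗ₖ vecMulVec (e r) (star (e j))) else 0 := by
      intro r hr
      rw [← Matrix.mul_kronecker_mul, vmv_mul, he r (by have := Finset.mem_range.mp hr; omega) i hi]
      split_ifs <;> simp
    rw [Finset.sum_congr rfl step1, Finset.sum_ite_eq' (Finset.range (T+1)) i, if_pos (by simp; omega)]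
    have step2 : ∀ r ∈ Finset.range (T+1),
        (((W i)ᴴ * A) ⊗ₖ vecMulVec (e i) (star (e j))) * ((W r) ⊗ₖ vecMulVec (e r) (star (e r)))
          = if j = r then (((W i)ᴴ * A * W r) ⊗ₖ vecMulVec (e i) (star (e r))) else 0 := by
      intro r hr
      rw [← Matrix.mul_kronecker_mul, vmv_mul, he j hj r (by have := Finset.mem_range.mp hr; omega)]
      split_ifs <;> simp
    rw [Finset.sum_congr rfl step2, Finset.sum_ite_eq (Finset.range (T+1)) j, if_pos (by simp; omega)]
  have hWt : U t * W (t-1) = W t := by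
    have := hW (t-1)
    rw [Nat.sub_add_cancel ht1] at this
    rw [this]
  -- distribute
  rw [Matrix.mul_smul, Matrix.smul_mul]
  congr 1
  rw [mul_sub, mul_sub, mul_add, sub_mul, sub_mul, add_mul]
  rw [key 1 t t htT htT, key 1 (t-1) (t-1) (by omega) (by omega),
    key (U t) t (t-1) htT (by omega), key (U t)ᴴ (t-1) t (by omega) htT]
  have h1 : (W t)ᴴ * 1 * W t = 1 := by rw [mul_one, hWu t]
  have h2 : (W (t-1))ᴴ * 1 * W (t-1) = 1 := by rw [mul_one, hWu (t-1)]
  have h3 : (W t)ᴴ * U t * W (t-1) = 1 := by rw [mul_assoc, hWt, hWu t]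
  have h4 : (W (t-1))ᴴ * (U t)ᴴ * W t = 1 := by
    rw [← conjTranspose_mul, hWt, hWu t]
  rw [h1, h2, h3, h4]
  ext ⟨a, b⟩ ⟨c, d⟩
  simp [kroneckerMap_apply, vecMulVec_apply]
  ring
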